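/- Let n be a positive integer, let J : ℝⁿ → ℝ be differentiable with J(z) ≥ 0 for all z, and let α : ℝ → ℝ be an extended class K function. Let x : ℝ → ℝⁿ be differentiable with ∇J(x(t)) ≠ 0 for all t ≥ 0, satisfying x'(t) = (α(-J(x(t))) / ‖∇J(x(t))‖²) • ∇J(x(t)) for all t ≥ 0. Then for all t ≥ 0 the derivative of t ↦ J(x(t)) equals α(-J(x(t))), the function t ↦ J(x(t)) is nonincreasing on [0,∞), and J(x(t)) → 0 as t → ∞. -/

import Mathlib

open Real Filter

/-- Corollary to Proposition 1: under the unrelaxed minimum-energy input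
`x' t = (α (-J (x t)) / ‖∇J (x t)‖²) • ∇J (x t)` (with `∇J (x t) ≠ 0` along the
trajectory), the cost satisfies `(d/dt) J (x t) = α (-J (x t))`, is nonincreasing
on `[0, ∞)`, and converges to `0` as `t → ∞`. -/
theorem cost_evolution_unrelaxed
    (n : ℕ) (hn : 0 < n)
    (J : EuclideanSpace ℝ (Fin n) → ℝ) (hJdiff : Differentiable ℝ J)
    (hJnn : ∀ z : EuclideanSpace ℝ (Fin n), 0 ≤ J z)
    (α : ℝ → ℝ) (hαcont : Continuous α) (hαmono : StrictMono α) (hα0 : α 0 = 0)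
    (x : ℝ → EuclideanSpace ℝ (Fin n)) (hx : Differentiable ℝ x)
    (hgrad : ∀ t : ℝ, 0 ≤ t → gradient J (x t) ≠ 0)
    (hode : ∀ t : ℝ, 0 ≤ t → deriv x t
      = (α (-(J (x t))) / ‖gradient J (x t)‖ ^ 2) • gradient J (x t)) :
    (∀ t : ℝ, 0 ≤ t → deriv (fun s => J (x s)) t = α (-(J (x t)))) ∧
    AntitoneOn (fun t => J (x t)) (Set.Ici (0 : ℝ)) ∧
    Tendsto (fun t => J (x t)) atTop (nhds 0) := by
  set y : ℝ → ℝ := fun s => J (x s) with hy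
  have hydiff : Differentiable ℝ y := hJdiff.comp hx
  -- derivative formula
  have hderiv : ∀ t : ℝ, 0 ≤ t → deriv y t = α (-(y t)) := by
    intro t ht
    have hg : HasGradientAt J (gradient J (x t)) (x t) :=
      (hJdiff (x t)).hasGradientAt
    have hfd := hg.hasFDerivAt
    have hcomp := hfd.comp_hasDerivAt t (hx t).hasDerivAt
    rw [(show HasDerivAt y _ t from hcomp).deriv]
    simp only [InnerProductSpace.toDual_apply_apply]
    rw [hode t ht, real_inner_smul_right, real_inner_self_eq_norm_sq]
    have hne : ‖gradient J (x t)‖ ^ 2 ≠ 0 := by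
      exact pow_ne_zero 2 (norm_ne_zero_iff.mpr (hgrad t ht))
    field_simp
    rw [mul_div_assoc, div_self (norm_ne_zero_iff.mpr (hgrad t ht)), mul_one]
  -- deriv nonpos on Ici
  have hnonpos : ∀ t : ℝ, 0 ≤ t → deriv y t ≤ 0 := by
    intro t ht
    rw [hderiv t ht]
    have : α (-(y t)) ≤ α 0 := hαmono.monotone (by simpa using hJnn (x t))
    simpa [hα0] using this
  have hanti : AntitoneOn y (Set.Ici (0 : ℝ)) := by
    apply antitoneOn_of_deriv_nonpos (convex_Ici 0) hydiff.continuous.continuousOn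
      (fun t _ => (hydiff t).differentiableWithinAt)
    intro t ht
    exact hnonpos t (le_of_lt (by simpa using ht))
  refine ⟨hderiv, hanti, ?_⟩
  -- the truncated function
  set g : ℝ → ℝ := fun t => y (t ⊔ 0) with hg
  have hganti : Antitone g := by
    intro s t hst
    exact hanti (Set.mem_Ici.mpr le_sup_right) (Set.mem_Ici.mpr le_sup_right)
      (sup_le_sup_right hst 0)
  have hgbdd : BddBelow (Set.range g) :=
    ⟨0, by rintro _ ⟨t, rfl⟩; exact hJnn _⟩
  set L : ℝ := ⨅ t, g t with hL
  have htend : Tendsto g atTop (nhds L) := tendsto_atTop_ciInf hganti hgbdd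
  have hLle : ∀ t : ℝ, L ≤ g t := fun t => ciInf_le hgbdd t
  have hL0 : 0 ≤ L := le_ciInf fun t => hJnn _
  have hgy : g =ᶠ[atTop] y := by
    filter_upwards [eventually_ge_atTop (0 : ℝ)] with t ht
    simp [hg, sup_eq_left.mpr ht]
  have htendy : Tendsto y atTop (nhds L) := htend.congr' hgy
  -- show L = 0
  have hLzero : L = 0 := by
    by_contra hne
    have hLpos : 0 < L := lt_of_le_of_ne hL0 (Ne.symm hne)
    have hαL : α (-L) < 0 := by
      have := hαmono (show -L < 0 by linarith)
      simpa [hα0] using this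
    -- y t ≤ y 0 + α(-L) * t for t ≥ 0
    have key : ∀ t : ℝ, 0 ≤ t → y t ≤ y 0 + α (-L) * t := by
      intro t ht
      set h : ℝ → ℝ := fun s => y s - α (-L) * s with hh
      have hhdiff : Differentiable ℝ h := hydiff.sub (differentiable_const _|>.mul differentiable_id)
      have hhanti : AntitoneOn h (Set.Ici (0 : ℝ)) := by
        apply antitoneOn_of_deriv_nonpos (convex_Ici 0) hhdiff.continuous.continuousOn
          (fun s _ => (hhdiff s).differentiableWithinAt)
        intro s hs
        have hs0 : (0 : ℝ) ≤ s := le_of_lt (by simpa using hs)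
        have hds : HasDerivAt h (deriv y s - α (-L)) s := by
          have h1 := (hydiff s).hasDerivAt
          have h2 := (hasDerivAt_id s).const_mul (α (-L))
          have h3 := h1.sub h2
          rw [mul_one] at h3
          exact h3
        rw [hds.deriv, hderiv s hs0]
        have hyL : L ≤ y s := by
          have := hLle s
          simpa [hg, sup_eq_left.mpr hs0] using this
        have : α (-(y s)) ≤ α (-L) := hαmono.monotone (by linarith)
        linarith
      have := hhanti (Set.self_mem_Ici) (Set.mem_Ici.mpr ht) ht
      simp only [hh] at this
      linarith
    obtain ⟨T, hT0, hTbig⟩ : ∃ T : ℝ, 0 ≤ T ∧ y 0 + α (-L) * T < 0 := by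
      refine ⟨(y 0 + 1) / (-α (-L)), ?_, ?_⟩
      · apply div_nonneg
        · have := hJnn (x 0); simp only [hy]; linarith
        · linarith
      · have hne' : α (-L) ≠ 0 := ne_of_lt hαL
        have heq : α (-L) * ((y 0 + 1) / (-α (-L))) = -(y 0 + 1) := by
          rw [div_neg, mul_neg, mul_div_cancel₀ _ hne']
        rw [heq]; linarith
    exact absurd (key T hT0) (not_le.mpr (lt_of_lt_of_le hTbig (by have := hJnn (x T); simpa [hy] using this)))
  rw [hLzero] at htendy
  exact htendy
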